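/- Let q > 0, α ∈ (0,1], H > 0, L > 2, and let Γ ∈ C¹(ℝ/Lℤ, ℝ^d) be arclength parametrized with parameters s, t satisfying |Γ(s) - Γ(t)| = 1 and Γ'(s) ⊥ (Γ(s) - Γ(t)), and with |Γ'(σ) - Γ'(τ)| ≤ H|σ-τ|^α for all σ, τ. Then the tangent-point radius satisfies r_tp[Γ](Γ(σ), Γ(τ)) < 6 for all σ with |s - σ| < ε₀ := min{1/8, (1/(8H))^{1/α}} and all τ with |t - τ| < 1/8. Consequently ∫_{I_ε(s)} ∫_{I_ρ(t)} r_tp[Γ](Γ(σ),Γ(τ))^{-q} dτ dσ > 6^{-q} ε ρ for all ρ ≤ 1/8, ε ≤ ε₀, where I_ε(s) is either (s-ε, s) or (s, s+ε) and similarly for I_ρ(t). -/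

import Mathlib

open MeasureTheory Set Real
open scoped RealInnerProductSpace

/-- The tangent-point radius `r_tp[Γ](Γ(σ), Γ(τ)) = |Γ(τ)-Γ(σ)|² / (2 dist(Γ(τ), Γ(σ)+ℝΓ'(σ)))`. -/
noncomputable def tpRad (d : ℕ) (Γ : ℝ → EuclideanSpace ℝ (Fin d)) (σ τ : ℝ) : ℝ :=
  ‖Γ τ - Γ σ‖ ^ 2 / (2 * Metric.infDist (Γ τ) {p | ∃ c : ℝ, p = Γ σ + c • deriv Γ σ})

/-- Periodic distance on `ℝ/Lℤ`. -/
noncomputable def pdistL (L x y : ℝ) : ℝ := ⨅ k : ℤ, |x - y + k * L|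

lemma infDist_line {d : ℕ} (a u x : EuclideanSpace ℝ (Fin d)) (hu : ‖u‖ = 1) :
    Metric.infDist x {p | ∃ c : ℝ, p = a + c • u}
      = Real.sqrt (‖x - a‖ ^ 2 - ⟪u, x - a⟫ ^ 2) := by
  have key : ∀ c : ℝ, ‖x - (a + c • u)‖ ^ 2
      = (‖x - a‖ ^ 2 - ⟪u, x - a⟫ ^ 2) + (c - ⟪u, x - a⟫) ^ 2 := by
    intro c
    have h1 : x - (a + c • u) = (x - a) - c • u := by
      rw [sub_add_eq_sub_sub]
    rw [h1, norm_sub_sq_real, real_inner_smul_right, norm_smul, real_inner_comm]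
    simp only [Real.norm_eq_abs, hu, mul_one, mul_pow, sq_abs]
    ring
  have hD : 0 ≤ ‖x - a‖ ^ 2 - ⟪u, x - a⟫ ^ 2 := by
    have := key ⟪u, x - a⟫
    nlinarith [sq_nonneg ‖x - (a + ⟪u, x - a⟫ • u)‖]
  have hne : ({p | ∃ c : ℝ, p = a + c • u} : Set (EuclideanSpace ℝ (Fin d))).Nonempty :=
    ⟨a + (0:ℝ) • u, ⟨0, rfl⟩⟩
  apply le_antisymm
  · have hmem : a + ⟪u, x - a⟫ • u ∈ {p | ∃ c : ℝ, p = a + c • u} := ⟨_, rfl⟩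
    refine le_trans (Metric.infDist_le_dist_of_mem hmem) ?_
    rw [dist_eq_norm]
    have : ‖x - (a + ⟪u, x - a⟫ • u)‖ = Real.sqrt (‖x - (a + ⟪u, x - a⟫ • u)‖ ^ 2) :=
      (Real.sqrt_sq (norm_nonneg _)).symm
    rw [this, key]
    simp
  · by_contra hlt
    push_neg at hlt
    obtain ⟨y, hy, hdy⟩ := (Metric.infDist_lt_iff hne).mp hlt
    obtain ⟨c, rfl⟩ := hy
    have h1 : Real.sqrt (‖x - a‖ ^ 2 - ⟪u, x - a⟫ ^ 2) ≤ dist x (a + c • u) := by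
      rw [dist_eq_norm]
      have h2 : ‖x - (a + c • u)‖ = Real.sqrt (‖x - (a + c • u)‖ ^ 2) :=
        (Real.sqrt_sq (norm_nonneg _)).symm
      rw [h2, key]
      exact Real.sqrt_le_sqrt (by nlinarith [sq_nonneg (c - ⟪u, x - a⟫)])
    linarith

lemma tpRad_eq {d : ℕ} (Γ : ℝ → EuclideanSpace ℝ (Fin d)) (harc : ∀ t, ‖deriv Γ t‖ = 1)
    (σ τ : ℝ) :
    tpRad d Γ σ τ = ‖Γ τ - Γ σ‖ ^ 2
      / (2 * Real.sqrt (‖Γ τ - Γ σ‖ ^ 2 - ⟪deriv Γ σ, Γ τ - Γ σ⟫ ^ 2)) := by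
  rw [tpRad, infDist_line _ _ _ (harc σ)]

lemma tpArith (N P : ℝ) (hN0 : 0 ≤ N) (hxl : 3/4 ≤ N) (hxu : N ≤ 5/4)
    (hip : |P| ≤ 13/32) :
    9/40 ≤ N ^ 2 / (2 * Real.sqrt (N ^ 2 - P ^ 2))
      ∧ N ^ 2 / (2 * Real.sqrt (N ^ 2 - P ^ 2)) ≤ 25/16 := by
  have hP2 : P ^ 2 ≤ (13/32:ℝ) ^ 2 := by
    rw [← sq_abs]; exact pow_le_pow_left₀ (abs_nonneg _) hip 2
  have hN2 : (3/4:ℝ) ^ 2 ≤ N ^ 2 := pow_le_pow_left₀ (by norm_num) hxl 2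
  have hD : (1:ℝ)/4 ≤ N ^ 2 - P ^ 2 := by nlinarith
  have hsq : 1/2 ≤ Real.sqrt (N ^ 2 - P ^ 2) := by
    rw [Real.le_sqrt (by norm_num) (by linarith)]
    nlinarith
  have hsqu : Real.sqrt (N ^ 2 - P ^ 2) ≤ 5/4 := by
    calc Real.sqrt (N ^ 2 - P ^ 2) ≤ Real.sqrt (N ^ 2) :=
          Real.sqrt_le_sqrt (sub_le_self _ (sq_nonneg P))
      _ = N := Real.sqrt_sq hN0
      _ ≤ 5/4 := hxu
  have h916 : (9:ℝ)/16 ≤ N ^ 2 := by nlinarith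
  have h2516 : N ^ 2 ≤ (25:ℝ)/16 := by nlinarith
  constructor
  · rw [le_div_iff₀ (by linarith)]
    nlinarith
  · rw [div_le_iff₀ (by linarith)]
    nlinarith

lemma tpRad_bounds {d : ℕ} (α H L : ℝ) (hα : α ∈ Ioc (0 : ℝ) 1) (hH : 0 < H)
    (Γ : ℝ → EuclideanSpace ℝ (Fin d)) (hC1 : ContDiff ℝ 1 Γ) (harc : ∀ t, ‖deriv Γ t‖ = 1)
    (s t : ℝ) (hchord : ‖Γ s - Γ t‖ = 1) (hperp : ⟪deriv Γ s, Γ s - Γ t⟫ = 0)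
    (hHold : ∀ σ τ : ℝ, ‖deriv Γ σ - deriv Γ τ‖ ≤ H * pdistL L σ τ ^ α)
    (σ τ : ℝ) (hσ : |s - σ| ≤ min (1/8) ((1 / (8 * H)) ^ (1/α))) (hτ : |t - τ| ≤ 1/8) :
    9/40 ≤ tpRad d Γ σ τ ∧ tpRad d Γ σ τ ≤ 25/16 := by
  have hα0 : (0:ℝ) < α := hα.1
  -- Γ is 1-Lipschitz
  have hlip : LipschitzWith 1 Γ := by
    apply lipschitzWith_of_nnnorm_deriv_le (hC1.differentiable one_ne_zero)
    intro x
    rw [← NNReal.coe_le_coe, coe_nnnorm, harc]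
    norm_num
  have hΓ : ∀ a b : ℝ, ‖Γ a - Γ b‖ ≤ |a - b| := by
    intro a b
    have := hlip.dist_le_mul a b
    simpa [dist_eq_norm, Real.dist_eq] using this
  -- pdistL bounds
  have hpd0 : ∀ a b : ℝ, 0 ≤ pdistL L a b := fun a b =>
    le_ciInf fun k => abs_nonneg _
  have hpd : ∀ a b : ℝ, pdistL L a b ≤ |a - b| := by
    intro a b
    have : pdistL L a b ≤ |a - b + (0:ℤ) * L| :=
      ciInf_le ⟨0, by rintro y ⟨k, rfl⟩; exact abs_nonneg _⟩ 0
    simpa using this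
  -- Hölder bound
  have hεH : |s - σ| ^ α ≤ 1 / (8 * H) := by
    have h1 : |s - σ| ≤ (1 / (8 * H)) ^ (1/α) := le_trans hσ (min_le_right _ _)
    calc |s - σ| ^ α ≤ ((1 / (8 * H)) ^ (1/α)) ^ α :=
          Real.rpow_le_rpow (abs_nonneg _) h1 hα0.le
      _ = 1 / (8 * H) := by
          rw [← Real.rpow_mul (by positivity), one_div_mul_cancel hα0.ne', Real.rpow_one]
  have hderiv : ‖deriv Γ s - deriv Γ σ‖ ≤ 1/8 := by
    calc ‖deriv Γ s - deriv Γ σ‖ ≤ H * pdistL L s σ ^ α := hHold s σ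
      _ ≤ H * |s - σ| ^ α := by
          exact mul_le_mul_of_nonneg_left
            (Real.rpow_le_rpow (hpd0 s σ) (hpd s σ) hα0.le) hH.le
      _ ≤ H * (1 / (8 * H)) := mul_le_mul_of_nonneg_left hεH hH.le
      _ = 1/8 := by field_simp
  have hσ8 : |s - σ| ≤ 1/8 := le_trans hσ (min_le_left _ _)
  have hs1 : ‖Γ s - Γ σ‖ ≤ 1/8 := le_trans (hΓ s σ) hσ8
  have ht1 : ‖Γ τ - Γ t‖ ≤ 1/8 := by
    refine le_trans (hΓ τ t) ?_
    rwa [abs_sub_comm]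
  have hxdecomp : Γ τ - Γ σ = (Γ τ - Γ t) + (Γ t - Γ s) + (Γ s - Γ σ) := by abel
  have hts : ‖Γ t - Γ s‖ = 1 := by rw [norm_sub_rev]; exact hchord
  have hxu : ‖Γ τ - Γ σ‖ ≤ 5/4 := by
    rw [hxdecomp]
    calc ‖(Γ τ - Γ t) + (Γ t - Γ s) + (Γ s - Γ σ)‖
        ≤ ‖(Γ τ - Γ t) + (Γ t - Γ s)‖ + ‖Γ s - Γ σ‖ := norm_add_le _ _
      _ ≤ ‖Γ τ - Γ t‖ + ‖Γ t - Γ s‖ + ‖Γ s - Γ σ‖ := by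
          have := norm_add_le (Γ τ - Γ t) (Γ t - Γ s); linarith
      _ ≤ 1/8 + 1 + 1/8 := by rw [hts]; linarith
      _ = 5/4 := by norm_num
  have hxl : 3/4 ≤ ‖Γ τ - Γ σ‖ := by
    have hd2 : Γ t - Γ s = (Γ τ - Γ σ) - (Γ τ - Γ t) - (Γ s - Γ σ) := by abel
    have h1 : ‖Γ t - Γ s‖ ≤ ‖Γ τ - Γ σ‖ + ‖Γ τ - Γ t‖ + ‖Γ s - Γ σ‖ := by
      rw [hd2]
      calc ‖(Γ τ - Γ σ) - (Γ τ - Γ t) - (Γ s - Γ σ)‖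
          ≤ ‖(Γ τ - Γ σ) - (Γ τ - Γ t)‖ + ‖Γ s - Γ σ‖ := norm_sub_le _ _
        _ ≤ ‖Γ τ - Γ σ‖ + ‖Γ τ - Γ t‖ + ‖Γ s - Γ σ‖ := by
            have := norm_sub_le (Γ τ - Γ σ) (Γ τ - Γ t); linarith
    rw [hts] at h1
    linarith
  -- inner product bound
  have hip : |⟪deriv Γ σ, Γ τ - Γ σ⟫| ≤ 13/32 := by
    have e1 : ⟪deriv Γ σ, Γ τ - Γ σ⟫
        = ⟪deriv Γ σ - deriv Γ s, Γ τ - Γ σ⟫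
          + (⟪deriv Γ s, Γ τ - Γ t⟫ + ⟪deriv Γ s, Γ t - Γ s⟫ + ⟪deriv Γ s, Γ s - Γ σ⟫) := by
      rw [inner_sub_left]
      have e2 : ⟪deriv Γ s, Γ τ - Γ σ⟫
          = ⟪deriv Γ s, Γ τ - Γ t⟫ + ⟪deriv Γ s, Γ t - Γ s⟫ + ⟪deriv Γ s, Γ s - Γ σ⟫ := by
        rw [hxdecomp, inner_add_right, inner_add_right]
      rw [e2]; ring
    have h0 : ⟪deriv Γ s, Γ t - Γ s⟫ = 0 := by
      have : Γ t - Γ s = -(Γ s - Γ t) := by abel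
      rw [this, inner_neg_right, hperp, neg_zero]
    have b1 : |⟪deriv Γ σ - deriv Γ s, Γ τ - Γ σ⟫| ≤ 5/32 := by
      refine le_trans (abs_real_inner_le_norm _ _) ?_
      have h2 : ‖deriv Γ σ - deriv Γ s‖ ≤ 1/8 := by rwa [norm_sub_rev]
      nlinarith [norm_nonneg (deriv Γ σ - deriv Γ s), norm_nonneg (Γ τ - Γ σ)]
    have b2 : |⟪deriv Γ s, Γ τ - Γ t⟫| ≤ 1/8 := by
      refine le_trans (abs_real_inner_le_norm _ _) ?_
      rw [harc s, one_mul]; exact ht1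
    have b3 : |⟪deriv Γ s, Γ s - Γ σ⟫| ≤ 1/8 := by
      refine le_trans (abs_real_inner_le_norm _ _) ?_
      rw [harc s, one_mul]; exact hs1
    rw [e1, h0]
    calc |⟪deriv Γ σ - deriv Γ s, Γ τ - Γ σ⟫
          + (⟪deriv Γ s, Γ τ - Γ t⟫ + 0 + ⟪deriv Γ s, Γ s - Γ σ⟫)|
        ≤ |⟪deriv Γ σ - deriv Γ s, Γ τ - Γ σ⟫|
          + (|⟪deriv Γ s, Γ τ - Γ t⟫| + |⟪deriv Γ s, Γ s - Γ σ⟫|) := by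
          have := abs_add_le ⟪deriv Γ σ - deriv Γ s, Γ τ - Γ σ⟫
            (⟪deriv Γ s, Γ τ - Γ t⟫ + 0 + ⟪deriv Γ s, Γ s - Γ σ⟫)
          have := abs_add_le (⟪deriv Γ s, Γ τ - Γ t⟫ + 0) ⟪deriv Γ s, Γ s - Γ σ⟫
          have := abs_add_le ⟪deriv Γ s, Γ τ - Γ t⟫ (0:ℝ)
          simp only [abs_zero, add_zero] at *
          linarith
      _ ≤ 5/32 + (1/8 + 1/8) := by linarith
      _ = 13/32 := by norm_num
  rw [tpRad_eq Γ harc]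
  exact tpArith _ _ (norm_nonneg _) hxl hxu hip

theorem stmt16 (d : ℕ) (q α H L : ℝ) (hq : 0 < q) (hα : α ∈ Ioc (0 : ℝ) 1)
    (hH : 0 < H) (hL : 2 < L)
    (Γ : ℝ → EuclideanSpace ℝ (Fin d)) (hper : ∀ t, Γ (t + L) = Γ t)
    (hC1 : ContDiff ℝ 1 Γ) (harc : ∀ t, ‖deriv Γ t‖ = 1)
    (s t : ℝ) (hchord : ‖Γ s - Γ t‖ = 1)
    (hperp : ⟪deriv Γ s, Γ s - Γ t⟫ = 0)
    (hHold : ∀ σ τ : ℝ, ‖deriv Γ σ - deriv Γ τ‖ ≤ H * pdistL L σ τ ^ α) :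
    (∀ σ τ : ℝ, |s - σ| < min (1/8) ((1 / (8 * H)) ^ (1/α)) → |t - τ| < 1/8 →
      tpRad d Γ σ τ < 6) ∧
    ∀ ε ρ : ℝ, 0 < ε → ε ≤ min (1/8) ((1 / (8 * H)) ^ (1/α)) → 0 < ρ → ρ ≤ 1/8 →
      ∀ Iε Iρ : Set ℝ,
        (Iε = Ioo (s - ε) s ∨ Iε = Ioo s (s + ε)) →
        (Iρ = Ioo (t - ρ) t ∨ Iρ = Ioo t (t + ρ)) →
        (∫ σ in Iε, ∫ τ in Iρ, tpRad d Γ σ τ ^ (-q)) > 6 ^ (-q) * ε * ρ := by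
  have hbnd := tpRad_bounds α H L hα hH Γ hC1 harc s t hchord hperp hHold
  constructor
  · intro σ τ h1 h2
    have := (hbnd σ τ h1.le h2.le).2
    linarith
  intro ε ρ hε hεle hρ hρle Iε Iρ hIε hIρ
  -- basic facts about the intervals
  have hIεsub : ∀ σ ∈ Iε, |s - σ| ≤ min (1/8) ((1 / (8 * H)) ^ (1/α)) := by
    rcases hIε with rfl | rfl <;> intro σ hσ <;>
      exact abs_le.mpr ⟨by linarith [hσ.1, hσ.2], by linarith [hσ.1, hσ.2]⟩
  have hIρsub : ∀ τ ∈ Iρ, |t - τ| ≤ 1/8 := by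
    rcases hIρ with rfl | rfl <;> intro τ hτ <;>
      exact abs_le.mpr ⟨by linarith [hτ.1, hτ.2], by linarith [hτ.1, hτ.2]⟩
  have hmIε : MeasurableSet Iε := by rcases hIε with rfl | rfl <;> exact measurableSet_Ioo
  have hmIρ : MeasurableSet Iρ := by rcases hIρ with rfl | rfl <;> exact measurableSet_Ioo
  have hvolε : volume Iε = ENNReal.ofReal ε := by
    rcases hIε with rfl | rfl <;> rw [Real.volume_Ioo] <;> ring_nf
  have hvolρ : volume Iρ = ENNReal.ofReal ρ := by
    rcases hIρ with rfl | rfl <;> rw [Real.volume_Ioo] <;> ring_nf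
  have hvolεR : (volume Iε).toReal = ε := by rw [hvolε, ENNReal.toReal_ofReal hε.le]
  have hvolρR : (volume Iρ).toReal = ρ := by rw [hvolρ, ENNReal.toReal_ofReal hρ.le]
  have hvolεfin : volume Iε ≠ ⊤ := by rw [hvolε]; exact ENNReal.ofReal_ne_top
  have hvolρfin : volume Iρ ≠ ⊤ := by rw [hvolρ]; exact ENNReal.ofReal_ne_top
  have hIρIcc : Iρ ⊆ Icc (t - 1/8) (t + 1/8) := by
    rcases hIρ with rfl | rfl <;> intro τ hτ <;>
      exact ⟨by linarith [hτ.1, hτ.2], by linarith [hτ.1, hτ.2]⟩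
  set c : ℝ := ((25:ℝ)/16) ^ (-q) with hc
  set C : ℝ := ((9:ℝ)/40) ^ (-q) with hC
  have hcpos : 0 < c := Real.rpow_pos_of_pos (by norm_num) _
  have hCpos : 0 < C := Real.rpow_pos_of_pos (by norm_num) _
  -- pointwise bounds on the integrand
  have hFbnd : ∀ σ ∈ Iε, ∀ τ ∈ Iρ, c ≤ tpRad d Γ σ τ ^ (-q) ∧ tpRad d Γ σ τ ^ (-q) ≤ C := by
    intro σ hσ τ hτ
    have hb := hbnd σ τ (hIεsub σ hσ) (hIρsub τ hτ)
    constructor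
    · exact Real.rpow_le_rpow_of_nonpos (by linarith [hb.1]) hb.2 (by linarith)
    · exact Real.rpow_le_rpow_of_nonpos (by norm_num) hb.1 (by linarith)
  -- integrability of the inner integrand
  have hcont : ∀ σ, |s - σ| ≤ min (1/8) ((1 / (8 * H)) ^ (1/α)) →
      ContinuousOn (fun τ => tpRad d Γ σ τ ^ (-q)) (Icc (t - 1/8) (t + 1/8)) := by
    intro σ hσ'
    have hΓC : Continuous Γ := hC1.continuous
    have htb : ∀ τ ∈ Icc (t - 1/8) (t + 1/8), 9/40 ≤ tpRad d Γ σ τ := by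
      intro τ hτ
      exact (hbnd σ τ hσ' (abs_le.mpr ⟨by linarith [hτ.1, hτ.2], by linarith [hτ.1, hτ.2]⟩)).1
    have hne : ∀ τ ∈ Icc (t - 1/8) (t + 1/8),
        2 * Real.sqrt (‖Γ τ - Γ σ‖ ^ 2 - ⟪deriv Γ σ, Γ τ - Γ σ⟫ ^ 2) ≠ 0 := by
      intro τ hτ h0
      have hb := htb τ hτ
      rw [tpRad_eq Γ harc, h0, div_zero] at hb
      norm_num at hb
    have heq : ∀ τ, tpRad d Γ σ τ ^ (-q)
        = (‖Γ τ - Γ σ‖ ^ 2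
            / (2 * Real.sqrt (‖Γ τ - Γ σ‖ ^ 2 - ⟪deriv Γ σ, Γ τ - Γ σ⟫ ^ 2))) ^ (-q) := by
      intro τ; rw [tpRad_eq Γ harc]
    simp only [heq]
    apply ContinuousOn.rpow_const
    · apply ContinuousOn.div
      · exact ((hΓC.sub continuous_const).norm.pow 2).continuousOn
      · apply (continuous_const.mul ?_).continuousOn
        apply Real.continuous_sqrt.comp
        apply Continuous.sub
        · exact (hΓC.sub continuous_const).norm.pow 2
        · exact (Continuous.inner continuous_const (hΓC.sub continuous_const)).pow 2
      · exact hne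
    · intro τ hτ
      left
      have hb := htb τ hτ
      rw [tpRad_eq Γ harc] at hb
      intro h0
      rw [h0] at hb
      norm_num at hb
  have hintρ : ∀ σ ∈ Iε, IntegrableOn (fun τ => tpRad d Γ σ τ ^ (-q)) Iρ := by
    intro σ hσ
    exact ((hcont σ (hIεsub σ hσ)).integrableOn_Icc).mono_set hIρIcc
  -- inner integral bounds
  have hinner_lb : ∀ σ ∈ Iε, c * ρ ≤ ∫ τ in Iρ, tpRad d Γ σ τ ^ (-q) := by
    intro σ hσ
    have := setIntegral_ge_of_const_le (μ := volume) hmIρ hvolρfin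
      (fun τ hτ => (hFbnd σ hσ τ hτ).1) (hintρ σ hσ)
    rw [measureReal_def, hvolρR, smul_eq_mul, mul_comm] at this; exact this
  have hinner_ub : ∀ σ ∈ Iε, (∫ τ in Iρ, tpRad d Γ σ τ ^ (-q)) ≤ C * ρ := by
    intro σ hσ
    have h1 : (∫ τ in Iρ, tpRad d Γ σ τ ^ (-q)) ≤ ∫ _ in Iρ, C := by
      apply setIntegral_mono_on (hintρ σ hσ)
        (integrableOn_const hvolρfin) hmIρ
      exact fun τ hτ => (hFbnd σ hσ τ hτ).2
    rw [setIntegral_const, measureReal_def, hvolρR, smul_eq_mul, mul_comm] at h1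
    exact h1
  -- measurability of the outer integrand
  have hFmeas : Measurable fun p : ℝ × ℝ => tpRad d Γ p.1 p.2 ^ (-q) := by
    have hΓC : Continuous Γ := hC1.continuous
    have hdC : Continuous (deriv Γ) := hC1.continuous_deriv le_rfl
    have heq : (fun p : ℝ × ℝ => tpRad d Γ p.1 p.2)
        = fun p : ℝ × ℝ => ‖Γ p.2 - Γ p.1‖ ^ 2
            / (2 * Real.sqrt (‖Γ p.2 - Γ p.1‖ ^ 2 - ⟪deriv Γ (p.1), Γ p.2 - Γ p.1⟫ ^ 2)) :=
      funext fun p => tpRad_eq Γ harc p.1 p.2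
    have hnum : Continuous fun p : ℝ × ℝ => ‖Γ p.2 - Γ p.1‖ ^ 2 :=
      ((hΓC.comp continuous_snd).sub (hΓC.comp continuous_fst)).norm.pow 2
    have hden : Continuous fun p : ℝ × ℝ =>
        2 * Real.sqrt (‖Γ p.2 - Γ p.1‖ ^ 2 - ⟪deriv Γ (p.1), Γ p.2 - Γ p.1⟫ ^ 2) := by
      apply continuous_const.mul
      apply Real.continuous_sqrt.comp
      apply hnum.sub
      exact (Continuous.inner (hdC.comp continuous_fst)
        ((hΓC.comp continuous_snd).sub (hΓC.comp continuous_fst))).pow 2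
    have : Measurable fun p : ℝ × ℝ => tpRad d Γ p.1 p.2 := by
      rw [heq]; exact hnum.measurable.div hden.measurable
    fun_prop
  have hGmeas : StronglyMeasurable fun σ => ∫ τ in Iρ, tpRad d Γ σ τ ^ (-q) :=
    hFmeas.stronglyMeasurable.integral_prod_right'
  have hGint : IntegrableOn (fun σ => ∫ τ in Iρ, tpRad d Γ σ τ ^ (-q)) Iε := by
    apply Integrable.mono' (g := fun _ => C * ρ)
      (integrableOn_const hvolεfin)
      hGmeas.aestronglyMeasurable.restrict
    filter_upwards [ae_restrict_mem hmIε] with σ hσ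
    rw [Real.norm_eq_abs, abs_le]
    constructor
    · have := hinner_lb σ hσ
      nlinarith [hCpos, hcpos, hρ]
    · exact hinner_ub σ hσ
  have hfinal : c * ρ * ε ≤ ∫ σ in Iε, ∫ τ in Iρ, tpRad d Γ σ τ ^ (-q) := by
    have := setIntegral_ge_of_const_le (μ := volume) hmIε hvolεfin hinner_lb hGint
    rw [measureReal_def, hvolεR, smul_eq_mul, mul_comm] at this; exact this
  have h6c : (6:ℝ) ^ (-q) < c := by
    rw [hc]
    exact Real.rpow_lt_rpow_of_neg (by norm_num) (by norm_num) (by linarith)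
  have hpos : 0 < (c - (6:ℝ) ^ (-q)) * ε * ρ :=
    mul_pos (mul_pos (sub_pos.mpr h6c) hε) hρ
  calc (6:ℝ) ^ (-q) * ε * ρ < c * ρ * ε := by nlinarith [hpos]
    _ ≤ _ := hfinal
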